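/- Let β > 0 and let K ⊆ V be the union of all minimal strongly connected components C with ρ(A_C) = e^β. If h, h' : V → ℝ both have nonnegative entries, satisfy A·h = e^β·h and A·h' = e^β·h', and agree on K (h|_K = h'|_K), then h = h'. -/

import Mathlib

open Filter Topology ENNReal

noncomputable section

/-- Every subset of a finite type is a `Fintype` (classically). -/
noncomputable def setFintypeAux {V : Type*} [Fintype V] (S : Set V) : Fintype S :=
  S.toFinite.fintype

attribute [local instance] setFintypeAux

variable {V : Type*} [Fintype V] [DecidableEq V]

/-- `v ⟶* w` : some power of `A` has a positive `(v,w)` entry. -/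
def Reaches (A : Matrix V V ℝ) (v w : V) : Prop := ∃ k : ℕ, 0 < (A ^ k) v w

/-- The spectral radius of a real matrix: the largest absolute value of a complex
eigenvalue. -/
def specRad (A : Matrix V V ℝ) : ℝ :=
  sSup {r : ℝ | ∃ μ ∈ spectrum ℂ (A.map fun t : ℝ => (t : ℂ)), r = ‖μ‖}

/-- The `S × S` submatrix of `A`. -/
def subMat (A : Matrix V V ℝ) (S : Set V) : Matrix S S ℝ :=
  A.submatrix Subtype.val Subtype.val

/-- `ρ(A_S)`. -/
def specRadSub (A : Matrix V V ℝ) (S : Set V) : ℝ := specRad (subMat A S)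

/-- The strongly connected component of `v`. -/
def sccOf (A : Matrix V V ℝ) (v : V) : Set V := {u | Reaches A v u ∧ Reaches A u v}

/-- `C` is a strongly connected component. -/
def IsSCC (A : Matrix V V ℝ) (C : Set V) : Prop := ∃ v : V, C = sccOf A v

/-- `C` is a minimal strongly connected component: every other component `C'` that reaches `C`
has strictly smaller spectral radius. -/
def IsMinSCC (A : Matrix V V ℝ) (C : Set V) : Prop :=
  IsSCC A C ∧ ∀ C' : Set V, IsSCC A C' → C' ≠ C →
    (∃ v' ∈ C', ∃ u ∈ C, Reaches A v' u) → specRadSub A C' < specRadSub A C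

/-- `Z_{w,v}(x) := Σ_{k=0}^∞ x^k (A^k)_{w,v} ∈ [0,∞]`. -/
def Zfun (A : Matrix V V ℝ) (w v : V) (x : ℝ) : ℝ≥0∞ :=
  ∑' k : ℕ, ENNReal.ofReal (x ^ k * (A ^ k) w v)

/-- `Z_v(x) := Σ_{w ∈ V} Z_{w,v}(x)`. -/
def Zvert (A : Matrix V V ℝ) (v : V) (x : ℝ) : ℝ≥0∞ := ∑ w : V, Zfun A w v x

-- ===== generic matrix lemmas =====
section Generic
variable {n : Type*} [Fintype n] [DecidableEq n]

lemma powEntryNonneg (B : Matrix n n ℝ) (hB : ∀ i j, 0 ≤ B i j) (k : ℕ) :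
    ∀ i j, 0 ≤ (B ^ k) i j := by
  induction k with
  | zero => intro i j; rw [pow_zero, Matrix.one_apply]; split <;> norm_num
  | succ m ih =>
      intro i j
      rw [pow_succ, Matrix.mul_apply]
      exact Finset.sum_nonneg fun x _ => mul_nonneg (ih i x) (hB x j)

lemma powEntryMul (B : Matrix n n ℝ) (hB : ∀ i j, 0 ≤ B i j) (k l : ℕ) (i x j : n) :
    (B ^ k) i x * (B ^ l) x j ≤ (B ^ (k + l)) i j := by
  rw [pow_add, Matrix.mul_apply]
  exact Finset.single_le_sum
    (f := fun y => (B ^ k) i y * (B ^ l) y j)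
    (fun y _ => mul_nonneg (powEntryNonneg B hB k i y) (powEntryNonneg B hB l y j))
    (Finset.mem_univ x)

lemma pow_mulVec_eig {R : Type*} [CommRing R] (B : Matrix n n R) (c : R) (f : n → R)
    (hf : B.mulVec f = c • f) (k : ℕ) : (B ^ k).mulVec f = c ^ k • f := by
  induction k with
  | zero => simp [Matrix.one_mulVec]
  | succ m ih =>
      rw [pow_succ', ← Matrix.mulVec_mulVec, ih, Matrix.mulVec_smul, hf,
        smul_smul, ← pow_succ]

lemma exists_eigvec {M : Matrix n n ℂ} {μ : ℂ} (hμ : μ ∈ spectrum ℂ M) :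
    ∃ z, z ≠ 0 ∧ M.mulVec z = μ • z := by
  rw [spectrum.mem_iff, Matrix.isUnit_iff_isUnit_det, isUnit_iff_ne_zero, ne_eq, not_not] at hμ
  obtain ⟨z, hz, hz0⟩ := Matrix.exists_mulVec_eq_zero_iff.mpr hμ
  refine ⟨z, hz, ?_⟩
  rw [Matrix.sub_mulVec, Algebra.algebraMap_eq_smul_one, Matrix.smul_mulVec,
    Matrix.one_mulVec] at hz0
  exact (sub_eq_zero.mp hz0).symm

lemma mem_spectrum_of {M : Matrix n n ℂ} {μ : ℂ} (z : n → ℂ) (hz : z ≠ 0)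
    (he : M.mulVec z = μ • z) : μ ∈ spectrum ℂ M := by
  rw [spectrum.mem_iff, Matrix.isUnit_iff_isUnit_det, isUnit_iff_ne_zero, ne_eq, not_not,
    ← Matrix.exists_mulVec_eq_zero_iff]
  refine ⟨z, hz, ?_⟩
  rw [Matrix.sub_mulVec, Algebra.algebraMap_eq_smul_one, Matrix.smul_mulVec,
    Matrix.one_mulVec, he, sub_self]

lemma abs_spectrum_le {M : Matrix n n ℂ} {μ : ℂ} (hμ : μ ∈ spectrum ℂ M) :
    ‖μ‖ ≤ ∑ i, ∑ j, ‖M i j‖ := by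
  obtain ⟨z, hz, he⟩ := exists_eigvec hμ
  obtain ⟨j₀, hj₀⟩ := Function.ne_iff.mp hz
  have : Nonempty n := ⟨j₀⟩
  obtain ⟨i, -, hi⟩ := Finset.exists_max_image Finset.univ (fun j => ‖z j‖)
    Finset.univ_nonempty
  have hzi : 0 < ‖z i‖ :=
    lt_of_lt_of_le (by simpa using hj₀) (hi j₀ (Finset.mem_univ j₀))
  have key : ‖μ‖ * ‖z i‖ ≤
      (∑ i', ∑ j, ‖M i' j‖) * ‖z i‖ := by
    calc ‖μ‖ * ‖z i‖ = ‖μ * z i‖ := (norm_mul _ _).symm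
    _ = ‖M.mulVec z i‖ := by rw [he]; simp
    _ = ‖∑ j, M i j * z j‖ := by rw [Matrix.mulVec, dotProduct]
    _ ≤ ∑ j, ‖M i j * z j‖ := norm_sum_le _ _
    _ ≤ ∑ j, ‖M i j‖ * ‖z i‖ := by
        refine Finset.sum_le_sum fun j _ => ?_
        rw [norm_mul]
        exact mul_le_mul_of_nonneg_left (hi j (Finset.mem_univ j)) (norm_nonneg _)
    _ = (∑ j, ‖M i j‖) * ‖z i‖ := by rw [Finset.sum_mul]
    _ ≤ (∑ i', ∑ j, ‖M i' j‖) * ‖z i‖ := by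
        refine mul_le_mul_of_nonneg_right ?_ (norm_nonneg _)
        exact Finset.single_le_sum
          (f := fun i' => ∑ j, ‖M i' j‖)
          (fun i' _ => Finset.sum_nonneg fun j _ => norm_nonneg _) (Finset.mem_univ i)
  exact le_of_mul_le_mul_right key hzi

lemma bddAbove_spec (B : Matrix n n ℝ) :
    BddAbove {r : ℝ | ∃ μ ∈ spectrum ℂ (B.map fun t : ℝ => (t : ℂ)), r = ‖μ‖} := by
  refine ⟨∑ i, ∑ j, ‖(B.map fun t : ℝ => (t : ℂ)) i j‖, ?_⟩
  rintro r ⟨μ, hμ, rfl⟩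
  exact abs_spectrum_le hμ

lemma le_specRad (B : Matrix n n ℝ) {lam : ℝ} (hlam : 0 ≤ lam) (g : n → ℝ) (hg : g ≠ 0)
    (he : B.mulVec g = lam • g) : lam ≤ specRad B := by
  set M := B.map (fun t : ℝ => (t : ℂ)) with hM
  have hz : M.mulVec (fun j => (g j : ℂ)) = (lam : ℂ) • (fun j => (g j : ℂ)) := by
    funext i
    have h1 := congrFun he i
    simp only [Matrix.mulVec, dotProduct, Pi.smul_apply, smul_eq_mul] at h1 ⊢
    have : ∑ j, M i j * (g j : ℂ) = ((∑ j, B i j * g j : ℝ) : ℂ) := by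
      push_cast [hM, Matrix.map_apply]
      rfl
    rw [this, h1]
    push_cast
    rfl
  have hzne : (fun j => (g j : ℂ)) ≠ 0 := by
    obtain ⟨j, hj⟩ := Function.ne_iff.mp hg
    exact Function.ne_iff.mpr ⟨j, by simpa using hj⟩
  have hmem : (lam : ℂ) ∈ spectrum ℂ M := mem_spectrum_of _ hzne hz
  have : lam = ‖(lam : ℂ)‖ := by rw [Complex.norm_of_nonneg hlam]
  exact le_csSup (bddAbove_spec B) ⟨(lam : ℂ), hmem, this⟩

lemma abs_le_of_subinv (B : Matrix n n ℝ) (hB : ∀ i j, 0 ≤ B i j) (x : n → ℝ)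
    (hx : ∀ i, 0 < x i) {lam : ℝ} (hsub : ∀ i, B.mulVec x i ≤ lam * x i)
    {μ : ℂ} (hμ : μ ∈ spectrum ℂ (B.map fun t : ℝ => (t : ℂ))) : ‖μ‖ ≤ lam := by
  obtain ⟨z, hz, he⟩ := exists_eigvec hμ
  set y := fun j => ‖z j‖ with hy
  obtain ⟨j₀, hj₀⟩ := Function.ne_iff.mp hz
  have : Nonempty n := ⟨j₀⟩
  obtain ⟨i, -, hi⟩ := Finset.exists_max_image Finset.univ (fun j => y j / x j)
    Finset.univ_nonempty
  set t := y i / x i with ht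
  have hyle : ∀ j, y j ≤ t * x j := fun j => by
    rw [← div_le_iff₀ (hx j)] at *
    exact hi j (Finset.mem_univ j)
  have htpos : 0 < t := by
    have h1 : 0 < y j₀ / x j₀ := by
      apply div_pos _ (hx j₀)
      simpa [hy] using hj₀
    exact lt_of_lt_of_le h1 (hi j₀ (Finset.mem_univ j₀))
  have hyi : y i = t * x i := by
    rw [ht, div_mul_cancel₀ _ (hx i).ne']
  have hyipos : 0 < y i := by rw [hyi]; exact mul_pos htpos (hx i)
  have key : ‖μ‖ * y i ≤ lam * y i := by
    calc ‖μ‖ * y i = ‖μ * z i‖ := by rw [norm_mul]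
    _ = ‖(B.map fun t : ℝ => (t : ℂ)).mulVec z i‖ := by rw [he]; simp
    _ = ‖∑ j, ((B i j : ℂ)) * z j‖ := by
        rw [Matrix.mulVec, dotProduct]; rfl
    _ ≤ ∑ j, ‖(B i j : ℂ) * z j‖ := norm_sum_le _ _
    _ = ∑ j, B i j * y j := by
        refine Finset.sum_congr rfl fun j _ => ?_
        rw [norm_mul, Complex.norm_of_nonneg (hB i j)]
    _ ≤ ∑ j, B i j * (t * x j) := by
        refine Finset.sum_le_sum fun j _ => mul_le_mul_of_nonneg_left (hyle j) (hB i j)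
    _ = t * B.mulVec x i := by
        rw [Matrix.mulVec, dotProduct, Finset.mul_sum]
        exact Finset.sum_congr rfl fun j _ => by ring
    _ ≤ t * (lam * x i) := mul_le_mul_of_nonneg_left (hsub i) htpos.le
    _ = lam * y i := by rw [hyi]; ring
  exact le_of_mul_le_mul_right key hyipos

lemma specRad_le_of_subinv (B : Matrix n n ℝ) (hB : ∀ i j, 0 ≤ B i j) (x : n → ℝ)
    (hx : ∀ i, 0 < x i) {lam : ℝ} (hlam : 0 ≤ lam) (hsub : ∀ i, B.mulVec x i ≤ lam * x i) :
    specRad B ≤ lam := by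
  apply Real.sSup_le _ hlam
  rintro r ⟨μ, hμ, rfl⟩
  exact abs_le_of_subinv B hB x hx hsub hμ

lemma mulVec_mono (B : Matrix n n ℝ) (hB : ∀ i j, 0 ≤ B i j) {a b : n → ℝ}
    (hab : ∀ j, a j ≤ b j) (i : n) : B.mulVec a i ≤ B.mulVec b i := by
  simp only [Matrix.mulVec, dotProduct]
  exact Finset.sum_le_sum fun j _ => mul_le_mul_of_nonneg_left (hab j) (hB i j)

lemma specRad_lt_of_strict_subinv (B : Matrix n n ℝ) (hB : ∀ i j, 0 ≤ B i j) (x : n → ℝ)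
    (hx : ∀ i, 0 < x i) {lam : ℝ} (hlam : 0 < lam)
    (hsub : ∀ i, B.mulVec x i ≤ lam * x i) (e : n) (hstrict : B.mulVec x e < lam * x e)
    (hirr : ∀ i j : n, ∃ m, 0 < (B ^ m) i j) : specRad B < lam := by
  have : Nonempty n := ⟨e⟩
  -- iterated subinvariance
  have hk : ∀ k i, (B ^ k).mulVec x i ≤ lam ^ k * x i := by
    intro k
    induction k with
    | zero => intro i; simp [Matrix.one_mulVec]
    | succ m ih =>
        intro i
        rw [pow_succ, ← Matrix.mulVec_mulVec]
        calc (B ^ m).mulVec (B.mulVec x) i ≤ (B ^ m).mulVec (fun j => lam * x j) i :=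
              mulVec_mono _ (powEntryNonneg B hB m) hsub i
        _ = lam * (B ^ m).mulVec x i := by
              have : (fun j => lam * x j) = lam • x := by funext j; simp
              rw [this, Matrix.mulVec_smul]; rfl
        _ ≤ lam * (lam ^ m * x i) := mul_le_mul_of_nonneg_left (ih i) hlam.le
        _ = lam ^ (m + 1) * x i := by ring
  set u := fun j => lam * x j - B.mulVec x j with hu
  have hu0 : ∀ j, 0 ≤ u j := fun j => sub_nonneg.mpr (hsub j)
  have hue : 0 < u e := sub_pos.mpr hstrict
  have hBxu : B.mulVec x = fun j => lam * x j - u j := by funext j; simp [hu]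
  -- key inequality
  have claim : ∀ (m d : ℕ) (j : n),
      lam ^ d * (B ^ m).mulVec u j ≤ lam ^ (m + 1 + d) * x j - (B ^ (m + 1 + d)).mulVec x j := by
    intro m d
    induction d with
    | zero =>
        intro j
        have h1 : (B ^ (m + 1)).mulVec x j
            = (B ^ m).mulVec x j * lam - (B ^ m).mulVec u j := by
          rw [pow_succ, ← Matrix.mulVec_mulVec, hBxu]
          have : (fun j => lam * x j - u j) = lam • x - u := by funext j; simp
          rw [this, Matrix.mulVec_sub]
          have : (B ^ m).mulVec (lam • x) = lam • (B ^ m).mulVec x :=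
            Matrix.mulVec_smul _ _ _
          rw [this]
          simp [mul_comm]
        rw [pow_zero, one_mul, h1]
        have e1 : lam ^ (m + 1 + 0) = lam ^ m * lam := by ring
        rw [e1]
        linarith [mul_le_mul_of_nonneg_right (hk m j) hlam.le]
    | succ d ih =>
        intro j
        have h2 : (B ^ (m + 1 + d + 1)).mulVec x j ≤ lam * (B ^ (m + 1 + d)).mulVec x j := by
          rw [pow_succ, ← Matrix.mulVec_mulVec, hBxu]
          calc (B ^ (m + 1 + d)).mulVec (fun j => lam * x j - u j) j
              ≤ (B ^ (m + 1 + d)).mulVec (fun j => lam * x j) j := by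
                apply mulVec_mono _ (powEntryNonneg B hB _)
                intro j'; nlinarith [hu0 j']
          _ = lam * (B ^ (m + 1 + d)).mulVec x j := by
                have : (fun j => lam * x j) = lam • x := by funext j; simp
                rw [this, Matrix.mulVec_smul]; rfl
        have e2 : lam ^ (d + 1) = lam ^ d * lam := pow_succ lam d
        have e3 : lam ^ (m + 1 + (d + 1)) = lam ^ (m + 1 + d) * lam := pow_succ lam (m + 1 + d)
        have hidx : m + 1 + (d + 1) = m + 1 + d + 1 := by omega
        rw [hidx] at e3 ⊢
        calc lam ^ (d + 1) * (B ^ m).mulVec u j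
            = lam * (lam ^ d * (B ^ m).mulVec u j) := by rw [e2]; ring
        _ ≤ lam * (lam ^ (m + 1 + d) * x j - (B ^ (m + 1 + d)).mulVec x j) :=
            mul_le_mul_of_nonneg_left (ih j) hlam.le
        _ = lam ^ (m + 1 + d + 1) * x j - lam * (B ^ (m + 1 + d)).mulVec x j := by
            rw [e3]; ring
        _ ≤ lam ^ (m + 1 + d + 1) * x j - (B ^ (m + 1 + d + 1)).mulVec x j := by
            linarith [h2]
  -- choose path lengths to e
  set mj := fun j => (hirr j e).choose with hmj
  have hmjpos : ∀ j, 0 < (B ^ mj j) j e := fun j => (hirr j e).choose_spec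
  set Mx := Finset.univ.sup mj with hMx
  set K := Mx + 1 with hK
  have hstrictK : ∀ j, (B ^ K).mulVec x j < lam ^ K * x j := by
    intro j
    have hle : mj j ≤ Mx := Finset.le_sup (Finset.mem_univ j)
    have hdecomp : mj j + 1 + (Mx - mj j) = K := by omega
    have h4 := claim (mj j) (Mx - mj j) j
    rw [hdecomp] at h4
    have h5 : 0 < (B ^ mj j).mulVec u j := by
      have : (B ^ mj j) j e * u e ≤ (B ^ mj j).mulVec u j := by
        rw [Matrix.mulVec, dotProduct]
        exact Finset.single_le_sum
          (f := fun w => (B ^ mj j) j w * u w)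
          (fun w _ => mul_nonneg (powEntryNonneg B hB _ _ _) (hu0 w)) (Finset.mem_univ e)
      nlinarith [hmjpos j, hue]
    nlinarith [pow_pos hlam (Mx - mj j)]
  -- the contraction factor
  have hlamK : 0 < lam ^ K := pow_pos hlam K
  obtain ⟨jm, -, hjm⟩ := Finset.exists_max_image Finset.univ
    (fun j => (B ^ K).mulVec x j / (lam ^ K * x j)) Finset.univ_nonempty
  set θ := (B ^ K).mulVec x jm / (lam ^ K * x jm) with hθ
  have hθ1 : θ < 1 := by
    rw [hθ, div_lt_one (mul_pos hlamK (hx jm))]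
    exact hstrictK jm
  have hθ0 : 0 ≤ θ := by
    apply div_nonneg _ (mul_pos hlamK (hx jm)).le
    rw [Matrix.mulVec, dotProduct]
    exact Finset.sum_nonneg fun w _ => mul_nonneg (powEntryNonneg B hB _ _ _) (hx w).le
  have hθsub : ∀ j, (B ^ K).mulVec x j ≤ θ * lam ^ K * x j := by
    intro j
    have h6 : (B ^ K).mulVec x j / (lam ^ K * x j) ≤ θ := hjm j (Finset.mem_univ j)
    rw [div_le_iff₀ (mul_pos hlamK (hx j))] at h6
    nlinarith [h6]
  set ε := θ ^ ((1 : ℝ) / K) with hε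
  have hKpos : 0 < K := by omega
  have hε1 : ε < 1 := Real.rpow_lt_one hθ0 hθ1 (by positivity)
  have hε0 : 0 ≤ ε := Real.rpow_nonneg hθ0 _
  have hεK : ε ^ K = θ := by
    rw [hε, ← Real.rpow_natCast (θ ^ ((1:ℝ)/K)) K, ← Real.rpow_mul hθ0]
    rw [one_div, inv_mul_cancel₀ (by exact_mod_cast hKpos.ne'), Real.rpow_one]
  -- bound each spectral element
  have hbound : ∀ μ ∈ spectrum ℂ (B.map fun t : ℝ => (t : ℂ)), ‖μ‖ ≤ ε * lam := by
    intro μ hμ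
    obtain ⟨z, hz, he'⟩ := exists_eigvec hμ
    have heK : ((B ^ K).map fun t : ℝ => (t : ℂ)).mulVec z = μ ^ K • z := by
      have hmap : ((B ^ K).map fun t : ℝ => (t : ℂ))
          = (B.map fun t : ℝ => (t : ℂ)) ^ K := by
        have := map_pow ((algebraMap ℝ ℂ).mapMatrix) B K
        simpa [RingHom.mapMatrix_apply] using this
      rw [hmap]
      exact pow_mulVec_eig _ μ z he' K
    have hμK : μ ^ K ∈ spectrum ℂ ((B ^ K).map fun t : ℝ => (t : ℂ)) :=
      mem_spectrum_of z hz heK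
    have h7 : ‖μ ^ K‖ ≤ θ * lam ^ K := by
      apply abs_le_of_subinv (B ^ K) (powEntryNonneg B hB K) x hx
        (fun i => by have := hθsub i; nlinarith) hμK
    have h8 : ‖μ‖ ^ K ≤ (ε * lam) ^ K := by
      rw [norm_pow] at h7
      calc ‖μ‖ ^ K ≤ θ * lam ^ K := h7
      _ = (ε * lam) ^ K := by rw [mul_pow, hεK]
    exact (pow_le_pow_iff_left₀ (norm_nonneg _) (by positivity) hKpos.ne').mp h8
  have h9 : specRad B ≤ ε * lam := by
    apply Real.sSup_le _ (mul_nonneg hε0 hlam.le)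
    rintro r ⟨μ, hμ, rfl⟩
    exact hbound μ hμ
  calc specRad B ≤ ε * lam := h9
  _ < 1 * lam := by nlinarith
  _ = lam := one_mul lam

end Generic

-- ===== graph lemmas =====
section Graph
variable (A : Matrix V V ℝ)

lemma reaches_refl (v : V) : Reaches A v v :=
  ⟨0, by rw [pow_zero, Matrix.one_apply_eq]; norm_num⟩

lemma reaches_trans (hA : ∀ i j, 0 ≤ A i j) {a b c : V} (h1 : Reaches A a b)
    (h2 : Reaches A b c) : Reaches A a c := by
  obtain ⟨k, hk⟩ := h1
  obtain ⟨l, hl⟩ := h2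
  exact ⟨k + l, lt_of_lt_of_le (mul_pos hk hl) (powEntryMul A hA k l a b c)⟩

lemma pos_of_reaches (hA : ∀ i j, 0 ≤ A i j) {c : ℝ} (hc : 0 < c) {f : V → ℝ}
    (hf0 : ∀ w, 0 ≤ f w) (hfe : A.mulVec f = c • f) {w u : V} (hr : Reaches A w u)
    (hu : 0 < f u) : 0 < f w := by
  obtain ⟨k, hk⟩ := hr
  have h1 := congrFun (pow_mulVec_eig A c f hfe k) w
  simp only [Matrix.mulVec, dotProduct, Pi.smul_apply, smul_eq_mul] at h1
  have h2 : (A ^ k) w u * f u ≤ ∑ x, (A ^ k) w x * f x :=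
    Finset.single_le_sum (fun x _ => mul_nonneg (powEntryNonneg A hA k w x) (hf0 x))
      (Finset.mem_univ u)
  rw [h1] at h2
  nlinarith [mul_pos hk hu, pow_pos hc k]

lemma mem_sccOf_self (v : V) : v ∈ sccOf A v := ⟨reaches_refl A v, reaches_refl A v⟩

lemma sccOf_eq_of_mem (hA : ∀ i j, 0 ≤ A i j) {u v : V} (hu : u ∈ sccOf A v) :
    sccOf A u = sccOf A v := by
  ext w
  constructor
  · rintro ⟨h1, h2⟩
    exact ⟨reaches_trans A hA hu.1 h1, reaches_trans A hA h2 hu.2⟩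
  · rintro ⟨h1, h2⟩
    exact ⟨reaches_trans A hA hu.2 h1, reaches_trans A hA h2 hu.1⟩

lemma exists_exit (hA : ∀ i j, 0 ≤ A i j) (S : Set V) {u : V} (hu : u ∉ S) :
    ∀ (m : ℕ) (a : V), a ∈ S → 0 < (A ^ m) a u →
    ∃ e ∈ S, ∃ w, w ∉ S ∧ 0 < A e w ∧ Reaches A w u := by
  intro m
  induction m with
  | zero =>
      intro a ha h0
      have hau : a = u := by
        by_contra hne
        rw [pow_zero, Matrix.one_apply_ne hne] at h0
        exact lt_irrefl 0 h0
      exact absurd (hau ▸ ha) hu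
  | succ m ih =>
      intro a ha h0
      rw [pow_succ', Matrix.mul_apply] at h0
      obtain ⟨x, hx⟩ : ∃ x, 0 < A a x * (A ^ m) x u := by
        by_contra hc
        push_neg at hc
        have : ∑ x, A a x * (A ^ m) x u ≤ 0 := Finset.sum_nonpos fun x _ => hc x
        linarith
      have h1 : 0 < A a x := by
        rcases (hA a x).lt_or_eq with h | h
        · exact h
        · rw [← h, zero_mul] at hx; exact absurd hx (lt_irrefl 0)
      have h2 : 0 < (A ^ m) x u := by
        rcases (powEntryNonneg A hA m x u).lt_or_eq with h | h
        · exact h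
        · rw [← h, mul_zero] at hx; exact absurd hx (lt_irrefl 0)
      by_cases hxS : x ∈ S
      · exact ih x hxS h2
      · exact ⟨a, ha, x, hxS, h1, ⟨m, h2⟩⟩

lemma subMat_scc_irred (hA : ∀ i j, 0 ≤ A i j) (v : V) :
    ∀ (m : ℕ) (u w : V) (hu : u ∈ sccOf A v) (hw : w ∈ sccOf A v),
      0 < (A ^ m) u w → ∃ m', 0 < ((subMat A (sccOf A v)) ^ m') ⟨u, hu⟩ ⟨w, hw⟩ := by
  intro m
  induction m with
  | zero =>
      intro u w hu hw h0
      have huw : u = w := by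
        by_contra hne
        rw [pow_zero, Matrix.one_apply_ne hne] at h0
        exact lt_irrefl 0 h0
      refine ⟨0, ?_⟩
      have hss : (⟨u, hu⟩ : sccOf A v) = ⟨w, hw⟩ := Subtype.ext huw
      rw [hss, pow_zero, Matrix.one_apply_eq]
      norm_num
  | succ m ih =>
      intro u w hu hw h0
      rw [pow_succ, Matrix.mul_apply] at h0
      obtain ⟨x, hx⟩ : ∃ x, 0 < (A ^ m) u x * A x w := by
        by_contra hc
        push_neg at hc
        have : ∑ x, (A ^ m) u x * A x w ≤ 0 := Finset.sum_nonpos fun x _ => hc x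
        linarith
      have h1 : 0 < (A ^ m) u x := by
        rcases (powEntryNonneg A hA m u x).lt_or_eq with h | h
        · exact h
        · rw [← h, zero_mul] at hx; exact absurd hx (lt_irrefl 0)
      have h2 : 0 < A x w := by
        rcases (hA x w).lt_or_eq with h | h
        · exact h
        · rw [← h, mul_zero] at hx; exact absurd hx (lt_irrefl 0)
      have hxmem : x ∈ sccOf A v :=
        ⟨reaches_trans A hA hu.1 ⟨m, h1⟩,
         reaches_trans A hA ⟨1, by rwa [pow_one]⟩ hw.2⟩
      obtain ⟨m₁, hm₁⟩ := ih u x hu hxmem h1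
      refine ⟨m₁ + 1, ?_⟩
      have hsubnn : ∀ i j, 0 ≤ subMat A (sccOf A v) i j := fun i j => hA _ _
      have hmul := powEntryMul (subMat A (sccOf A v)) hsubnn m₁ 1
        ⟨u, hu⟩ ⟨x, hxmem⟩ ⟨w, hw⟩
      have h3 : 0 < ((subMat A (sccOf A v)) ^ 1) ⟨x, hxmem⟩ ⟨w, hw⟩ := by
        rw [pow_one]; exact h2
      exact lt_of_lt_of_le (mul_pos hm₁ h3) hmul

end Graph

/-- `K` is the union of all minimal strongly connected components `C` with
`ρ(A_C) = e^β`; two nonnegative vectors `h, h'` with `A h = e^β h`, `A h' = e^β h'` that agree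
on `K` are equal. -/
theorem stmt15 {V : Type*} [Fintype V] [DecidableEq V] [Nonempty V]
    (A : Matrix V V ℝ) (hA : ∀ i j, 0 ≤ A i j)
    (β : ℝ) (hβ : 0 < β)
    (K : Set V)
    (hK : K = {u : V | ∃ C : Set V, IsMinSCC A C ∧ specRadSub A C = Real.exp β ∧ u ∈ C})
    (h h' : V → ℝ) (hpos : ∀ u, 0 ≤ h u) (hpos' : ∀ u, 0 ≤ h' u)
    (hharm : A.mulVec h = Real.exp β • h) (hharm' : A.mulVec h' = Real.exp β • h')
    (hagree : ∀ u ∈ K, h u = h' u) :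
    h = h' := by
  classical
  set lam := Real.exp β with hlamdef
  have hlam0 : 0 < lam := Real.exp_pos β
  set g : V → ℝ := h - h' with hgdef
  have hgeig : A.mulVec g = lam • g := by
    rw [hgdef, Matrix.mulVec_sub, hharm, hharm', smul_sub]
  suffices hzero : ∀ v, g v = 0 by
    funext v
    have := hzero v
    rw [hgdef] at this
    simp only [Pi.sub_apply] at this
    linarith
  -- downward sets
  let D : V → Finset V := fun v => {w : V | Reaches A v w}.toFinset
  have hDmem : ∀ v w, w ∈ D v ↔ Reaches A v w := fun v w => Set.mem_toFinset
  have hDsub : ∀ {v w}, Reaches A v w → D w ⊆ D v := by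
    intro v w hvw x hx
    exact (hDmem v x).mpr (reaches_trans A hA hvw ((hDmem w x).mp hx))
  have main : ∀ N : ℕ, ∀ v : V, (D v).card ≤ N → g v = 0 := by
    intro N
    induction N with
    | zero =>
        intro v hv
        have h1 : v ∈ D v := (hDmem v v).mpr (reaches_refl A v)
        have := Finset.card_pos.mpr ⟨v, h1⟩
        omega
    | succ N ihN =>
        intro v hv
        have IH : ∀ w, Reaches A v w → ¬ Reaches A w v → g w = 0 := by
          intro w h1 h2
          apply ihN
          have hsub : D w ⊆ D v := hDsub h1
          have hssub : D w ⊂ D v := by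
            refine ⟨hsub, fun hsup => h2 ?_⟩
            exact (hDmem w v).mp (hsup ((hDmem v v).mpr (reaches_refl A v)))
          have := Finset.card_lt_card hssub
          omega
        set C := sccOf A v with hC
        suffices hCz : ∀ u, u ∈ C → g u = 0 by exact hCz v (mem_sccOf_self A v)
        by_cases hCK : ∃ u₀ ∈ C, u₀ ∈ K
        · -- C is contained in K
          obtain ⟨u₀, hu₀C, hu₀K⟩ := hCK
          rw [hK] at hu₀K
          obtain ⟨Cm, hCmmin, hCmrad, hu₀Cm⟩ := hu₀K
          obtain ⟨v₀, hv₀⟩ := hCmmin.1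
          have hCmC : Cm = C := by
            have e1 : sccOf A u₀ = sccOf A v₀ := sccOf_eq_of_mem A hA (hv₀ ▸ hu₀Cm)
            have e2 : sccOf A u₀ = sccOf A v := sccOf_eq_of_mem A hA (hC ▸ hu₀C)
            rw [hv₀, hC, ← e1, e2]
          intro u hu
          have huK : u ∈ K := by
            rw [hK]
            exact ⟨Cm, hCmmin, hCmrad, hCmC ▸ hu⟩
          have := hagree u huK
          rw [hgdef]
          simp only [Pi.sub_apply]
          linarith
        · push_neg at hCK
          intro u hu
          by_contra hgu
          -- terms leaving C vanish
          have houtside : ∀ (a : V), a ∈ C → ∀ w, w ∉ C → A a w ≠ 0 → g w = 0 := by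
            intro a ha w hw hAaw
            apply IH w
            · exact reaches_trans A hA ha.1
                ⟨1, by rw [pow_one]; exact lt_of_le_of_ne (hA a w) (Ne.symm hAaw)⟩
            · intro hwv
              exact hw ⟨reaches_trans A hA ha.1
                ⟨1, by rw [pow_one]; exact lt_of_le_of_ne (hA a w) (Ne.symm hAaw)⟩, hwv⟩
          -- restricted eigen equation for g
          have hsubeig : (subMat A C).mulVec (fun i : C => g i.val)
              = lam • (fun i : C => g i.val) := by
            funext i
            have h1 := congrFun hgeig i.val
            simp only [Matrix.mulVec, dotProduct, Pi.smul_apply, smul_eq_mul] at h1 ⊢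
            calc ∑ j : C, subMat A C i j * g j.val
                = ∑ w ∈ C.toFinset, A i.val w * g w := by
                  rw [Finset.sum_subtype C.toFinset (fun x => Set.mem_toFinset)
                    (fun w => A i.val w * g w)]
                  rfl
            _ = ∑ w : V, A i.val w * g w := by
                  apply Finset.sum_subset (Finset.subset_univ _)
                  intro w _ hw
                  rw [Set.mem_toFinset] at hw
                  by_cases hz : A i.val w = 0
                  · rw [hz, zero_mul]
                  · rw [houtside i.val i.2 w hw hz, mul_zero]
            _ = lam * g i.val := h1
          have hgC : (fun i : C => g i.val) ≠ 0 :=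
            Function.ne_iff.mpr ⟨⟨u, hu⟩, hgu⟩
          have hlow : lam ≤ specRad (subMat A C) :=
            le_specRad _ hlam0.le _ hgC hsubeig
          -- a nonnegative eigenvector positive at u
          obtain ⟨f, hf0, hfe, hfu⟩ : ∃ f : V → ℝ,
              (∀ w, 0 ≤ f w) ∧ A.mulVec f = lam • f ∧ 0 < f u := by
            by_cases hhu : 0 < h u
            · exact ⟨h, hpos, hharm, hhu⟩
            · refine ⟨h', hpos', hharm', ?_⟩
              have h2 : h u = 0 := le_antisymm (not_lt.mp hhu) (hpos u)
              have h3 : h u - h' u ≠ 0 := by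
                rw [hgdef] at hgu
                simpa using hgu
              rcases (hpos' u).lt_or_eq with h4 | h4
              · exact h4
              · exfalso; apply h3; rw [h2, ← h4]; ring
          have hfpos : ∀ a, Reaches A a u → 0 < f a := fun a ha =>
            pos_of_reaches A hA hlam0 hf0 hfe ha hfu
          -- subinvariance of f on C
          have hfsubC : ∀ i : C, (subMat A C).mulVec (fun j : C => f j.val) i
              ≤ lam * f i.val := by
            intro i
            have h1 := congrFun hfe i.val
            simp only [Matrix.mulVec, dotProduct, Pi.smul_apply, smul_eq_mul] at h1 ⊢
            calc ∑ j : C, subMat A C i j * f j.val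
                = ∑ w ∈ C.toFinset, A i.val w * f w := by
                  rw [Finset.sum_subtype C.toFinset (fun x => Set.mem_toFinset)
                    (fun w => A i.val w * f w)]
                  rfl
            _ ≤ ∑ w : V, A i.val w * f w := by
                  apply Finset.sum_le_sum_of_subset_of_nonneg (Finset.subset_univ _)
                  intro w _ _
                  exact mul_nonneg (hA _ _) (hf0 w)
            _ = lam * f i.val := h1
          have hfposC : ∀ i : C, 0 < f i.val := fun i =>
            hfpos i.val (reaches_trans A hA i.2.2 hu.1)
          have hup : specRad (subMat A C) ≤ lam :=
            specRad_le_of_subinv _ (fun i j => hA _ _) _ hfposC hlam0.le hfsubC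
          have hrad : specRad (subMat A C) = lam := le_antisymm hup hlow
          -- C is not minimal
          have hCSCC : IsSCC A C := ⟨v, hC⟩
          have hnotmin : ¬ IsMinSCC A C := by
            intro hmin
            exact hCK u hu (by
              rw [hK]
              exact ⟨C, hmin, hrad, hu⟩)
          have hex : ∃ C', IsSCC A C' ∧ C' ≠ C ∧
              (∃ v' ∈ C', ∃ u₀ ∈ C, Reaches A v' u₀) ∧
              specRadSub A C ≤ specRadSub A C' := by
            rw [IsMinSCC] at hnotmin
            push_neg at hnotmin
            exact hnotmin hCSCC
          obtain ⟨C', hC'SCC, hC'ne, ⟨v', hv'C', u₀, hu₀C, hreach⟩, hC'rad⟩ := hex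
          obtain ⟨v₁, hv₁⟩ := hC'SCC
          subst hv₁
          have hu₀notC' : u₀ ∉ sccOf A v₁ := by
            intro hmem
            apply hC'ne
            have e1 : sccOf A u₀ = sccOf A v₁ := sccOf_eq_of_mem A hA hmem
            have e2 : sccOf A u₀ = sccOf A v := sccOf_eq_of_mem A hA (hC ▸ hu₀C)
            rw [hC, ← e1, e2]
          have hreach_u : Reaches A u₀ u :=
            reaches_trans A hA hu₀C.2 hu.1
          -- f is positive on C'
          have hfposC' : ∀ i : sccOf A v₁, 0 < f i.val := by
            intro i
            apply hfpos
            exact reaches_trans A hA (reaches_trans A hA i.2.2 hv'C'.1)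
              (reaches_trans A hA hreach hreach_u)
          -- exit edge
          obtain ⟨k, hk⟩ := hreach
          obtain ⟨e, heC', w, hwC', hAew, hwu₀⟩ :=
            exists_exit A hA (sccOf A v₁) hu₀notC' k v' hv'C' hk
          have hfw : 0 < f w :=
            hfpos w (reaches_trans A hA hwu₀ hreach_u)
          -- subinvariance on C', strict at e
          have hfsubC' : ∀ i : sccOf A v₁,
              (subMat A (sccOf A v₁)).mulVec (fun j : sccOf A v₁ => f j.val) i
              ≤ lam * f i.val := by
            intro i
            have h1 := congrFun hfe i.val
            simp only [Matrix.mulVec, dotProduct, Pi.smul_apply, smul_eq_mul] at h1 ⊢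
            calc ∑ j : sccOf A v₁, subMat A (sccOf A v₁) i j * f j.val
                = ∑ w' ∈ (sccOf A v₁).toFinset, A i.val w' * f w' := by
                  rw [Finset.sum_subtype (sccOf A v₁).toFinset (fun x => Set.mem_toFinset)
                    (fun w' => A i.val w' * f w')]
                  rfl
            _ ≤ ∑ w' : V, A i.val w' * f w' := by
                  apply Finset.sum_le_sum_of_subset_of_nonneg (Finset.subset_univ _)
                  intro w' _ _
                  exact mul_nonneg (hA _ _) (hf0 w')
            _ = lam * f i.val := h1
          have hstricte : (subMat A (sccOf A v₁)).mulVec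
              (fun j : sccOf A v₁ => f j.val) ⟨e, heC'⟩ < lam * f e := by
            have h1 := congrFun hfe e
            simp only [Matrix.mulVec, dotProduct, Pi.smul_apply, smul_eq_mul] at h1 ⊢
            have step1 : ∑ j : sccOf A v₁, subMat A (sccOf A v₁) ⟨e, heC'⟩ j * f j.val
                = ∑ w' ∈ (sccOf A v₁).toFinset, A e w' * f w' := by
              rw [Finset.sum_subtype (sccOf A v₁).toFinset (fun x => Set.mem_toFinset)
                (fun w' => A e w' * f w')]
              rfl
            have hsubset : (sccOf A v₁).toFinset ⊆ Finset.univ.erase w := by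
              intro x hx
              rw [Finset.mem_erase]
              rw [Set.mem_toFinset] at hx
              exact ⟨fun hxw => hwC' (hxw ▸ hx), Finset.mem_univ x⟩
            have step2 : ∑ w' ∈ (sccOf A v₁).toFinset, A e w' * f w'
                ≤ ∑ w' ∈ Finset.univ.erase w, A e w' * f w' := by
              apply Finset.sum_le_sum_of_subset_of_nonneg hsubset
              intro w' _ _
              exact mul_nonneg (hA _ _) (hf0 w')
            have step3 : ∑ w' ∈ Finset.univ.erase w, A e w' * f w' + A e w * f w
                = ∑ w' : V, A e w' * f w' :=
              Finset.sum_erase_add _ _ (Finset.mem_univ w)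
            have hpos' : 0 < A e w * f w := mul_pos hAew hfw
            rw [step1]
            calc ∑ w' ∈ (sccOf A v₁).toFinset, A e w' * f w'
                ≤ ∑ w' ∈ Finset.univ.erase w, A e w' * f w' := step2
            _ < ∑ w' : V, A e w' * f w' := by linarith
            _ = lam * f e := h1
          -- irreducibility of subMat on C'
          have hirr : ∀ i j : sccOf A v₁, ∃ m, 0 < ((subMat A (sccOf A v₁)) ^ m) i j := by
            intro i j
            obtain ⟨m, hm⟩ := reaches_trans A hA i.2.2 j.2.1
            obtain ⟨m', hm'⟩ := subMat_scc_irred A hA v₁ m i.val j.val i.2 j.2 hm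
            exact ⟨m', by simpa using hm'⟩
          have hlt : specRad (subMat A (sccOf A v₁)) < lam :=
            specRad_lt_of_strict_subinv _ (fun i j => hA _ _) _ hfposC' hlam0
              hfsubC' ⟨e, heC'⟩ hstricte hirr
          have hge : specRadSub A C ≤ specRadSub A (sccOf A v₁) := hC'rad
          rw [specRadSub, specRadSub, hrad] at hge
          linarith
  intro v
  exact main (Fintype.card V) v (by
    calc (D v).card ≤ Finset.univ.card := Finset.card_le_univ _
    _ = Fintype.card V := Finset.card_univ)
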